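/- Let A be a Novikov algebra over a field k of characteristic zero. Then every term A^{(i)} of the derived series of A is a two-sided ideal of A. -/
import Mathlib


variable {k A : Type*} [Field k] [CharZero k] [AddCommGroup A] [Module k A]

/-- The derived series of an algebra `(A, mul)`:
`derSeries mul 0 = A^{(0)} = A` and `derSeries mul (i+1) = A^{(i+1)} = [A^{(i)}, A^{(i)}]`,
the subspace spanned by all commutators `x·y − y·x` with `x, y ∈ A^{(i)}`. -/
def derSeries (mul : A →ₗ[k] A →ₗ[k] A) : ℕ → Submodule k A
  | 0 => ⊤
  | i + 1 =>
    Submodule.span k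
      {z : A | ∃ x ∈ derSeries mul i, ∃ y ∈ derSeries mul i, z = mul x y - mul y x}

/-- In a Novikov algebra `A` over a field `k` of characteristic zero,
every term `A^{(i)}` of the derived series is a two-sided ideal of `A`. -/
theorem novikov_derivedSeries_ideal
    (mul : A →ₗ[k] A →ₗ[k] A)
    (hls : ∀ x y z : A,
      mul x (mul y z) - mul (mul x y) z = mul y (mul x z) - mul (mul y x) z)
    (hnov : ∀ x y z : A, mul (mul x y) z = mul (mul x z) y) :
    ∀ i : ℕ, ∀ a : A, ∀ x ∈ derSeries mul i,
      mul a x ∈ derSeries mul i ∧ mul x a ∈ derSeries mul i := by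
  intro i
  induction i with
  | zero => intro a x _; exact ⟨trivial, trivial⟩
  | succ i ih =>
    intro a
    have hspan : derSeries mul (i + 1) = Submodule.span k
        {z : A | ∃ x ∈ derSeries mul i, ∃ y ∈ derSeries mul i, z = mul x y - mul y x} := rfl
    -- right multiplication on generators
    have hgenR : ∀ b : A, ∀ x ∈ derSeries mul i, ∀ y ∈ derSeries mul i,
        mul (mul x y - mul y x) b ∈ derSeries mul (i + 1) := by
      intro b x hx y hy
      have hyb : mul y b ∈ derSeries mul i := (ih b y hy).2
      have hxb : mul x b ∈ derSeries mul i := (ih b x hx).2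
      have key : (2 : k) • mul (mul x y - mul y x) b =
          (mul x (mul y b) - mul (mul y b) x) - (mul y (mul x b) - mul (mul x b) y) := by
        have h1 := eq_add_of_sub_eq (hls x y b)
        have h2 := hnov y b x
        have h3 := hnov x b y
        simp only [map_sub, LinearMap.sub_apply, two_smul]
        rw [h1, h2, h3]
        abel
      have hm : (mul x (mul y b) - mul (mul y b) x) - (mul y (mul x b) - mul (mul x b) y)
          ∈ derSeries mul (i + 1) := by
        rw [hspan]
        exact sub_mem (Submodule.subset_span ⟨x, hx, mul y b, hyb, rfl⟩)
          (Submodule.subset_span ⟨y, hy, mul x b, hxb, rfl⟩)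
      have heq : mul (mul x y - mul y x) b = (2 : k)⁻¹ •
          ((mul x (mul y b) - mul (mul y b) x) - (mul y (mul x b) - mul (mul x b) y)) := by
        rw [← key, smul_smul, inv_mul_cancel₀ two_ne_zero, one_smul]
      rw [heq]
      exact Submodule.smul_mem _ _ hm
    -- left multiplication on generators
    have hgenL : ∀ x ∈ derSeries mul i, ∀ y ∈ derSeries mul i,
        mul a (mul x y - mul y x) ∈ derSeries mul (i + 1) := by
      intro x hx y hy
      have hay : mul a y ∈ derSeries mul i := (ih a y hy).1
      have hax : mul a x ∈ derSeries mul i := (ih a x hx).1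
      have key : mul a (mul x y - mul y x) =
          ((mul x (mul a y) - mul (mul a y) x) - (mul y (mul a x) - mul (mul a x) y))
          - mul (mul x y - mul y x) a := by
        have h1 := eq_add_of_sub_eq (hls a x y)
        have h2 := eq_add_of_sub_eq (hls a y x)
        have h3 := hnov x a y
        have h4 := hnov y a x
        simp only [map_sub, LinearMap.sub_apply]
        rw [h1, h2, h3, h4]
        abel
      rw [key]
      refine sub_mem ?_ (hgenR a x hx y hy)
      rw [hspan]
      exact sub_mem (Submodule.subset_span ⟨x, hx, mul a y, hay, rfl⟩)
        (Submodule.subset_span ⟨y, hy, mul a x, hax, rfl⟩)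
    intro z hz
    have hz' : z ∈ Submodule.span k
        {w : A | ∃ x ∈ derSeries mul i, ∃ y ∈ derSeries mul i, w = mul x y - mul y x} := hz
    refine Submodule.span_induction (p := fun w _ =>
        mul a w ∈ derSeries mul (i + 1) ∧ mul w a ∈ derSeries mul (i + 1)) ?_ ?_ ?_ ?_ hz'
    · rintro w ⟨x, hx, y, hy, rfl⟩
      exact ⟨hgenL x hx y hy, hgenR a x hx y hy⟩
    · simp only [map_zero, LinearMap.zero_apply]
      exact ⟨(derSeries mul (i + 1)).zero_mem, (derSeries mul (i + 1)).zero_mem⟩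
    · intro u v _ _ hu hv
      simp only [map_add, LinearMap.add_apply]
      exact ⟨add_mem hu.1 hv.1, add_mem hu.2 hv.2⟩
    · intro c u _ hu
      simp only [map_smul, LinearMap.smul_apply]
      exact ⟨Submodule.smul_mem _ _ hu.1, Submodule.smul_mem _ _ hu.2⟩
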